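/- Let N_c, C_x, C_y, E_x, E_y be positive integers satisfying E_x · E_y · N_c > (C_x + E_x − 1) · (C_y + E_y − 1). Then for any family of functions S_1, …, S_{N_c} : ℤ × ℤ → ℂ, each finitely supported and supported in a C_x × C_y rectangle, there exists a family α_1, …, α_{N_c} : ℤ × ℤ → ℂ, not all identically zero, with each α_c supported in an E_x × E_y rectangle, such that the sum over c of the convolutions α_c ⋆ S_c is identically zero on ℤ × ℤ. -/

import Mathlib

/-- `f` is supported in an `a × b` rectangle: its support is contained in
`{(x, y) : 0 ≤ x < a, 0 ≤ y < b}`. -/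
def SupportedInRect (f : AddMonoidAlgebra ℂ (ℤ × ℤ)) (a b : ℕ) : Prop :=
  ∀ p ∈ f.coeff.support, 0 ≤ p.1 ∧ p.1 < (a : ℤ) ∧ 0 ≤ p.2 ∧ p.2 < (b : ℤ)

namespace AnnihilAux

variable (Ex Ey : ℕ)

/-- Embedding of a rectangle's worth of coefficients into `ℤ × ℤ`. -/
def ι2 (p : Fin Ex × Fin Ey) : ℤ × ℤ := ((p.1 : ℤ), (p.2 : ℤ))

lemma ι2_inj : Function.Injective (ι2 Ex Ey) := by
  rintro ⟨a, b⟩ ⟨c, d⟩ h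
  simp only [ι2, Prod.mk.injEq] at h
  have h1 : (a : ℕ) = c := by exact_mod_cast h.1
  have h2 : (b : ℕ) = d := by exact_mod_cast h.2
  simp [Prod.ext_iff, Fin.ext_iff, h1, h2]

/-- Linear embedding of functions on the finite rectangle into `AddMonoidAlgebra`. -/
noncomputable def emb : ((Fin Ex × Fin Ey) → ℂ) →ₗ[ℂ] AddMonoidAlgebra ℂ (ℤ × ℤ) where
  toFun w := ∑ p, AddMonoidAlgebra.single (ι2 Ex Ey p) (w p)
  map_add' w₁ w₂ := by
    simp [AddMonoidAlgebra.single_add, Finset.sum_add_distrib]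
  map_smul' r w := by
    simp [AddMonoidAlgebra.smul_single, Finset.smul_sum]

lemma emb_apply (w : (Fin Ex × Fin Ey) → ℂ) (q : Fin Ex × Fin Ey) :
    (emb Ex Ey w).coeff (ι2 Ex Ey q) = w q := by
  classical
  have : (emb Ex Ey w).coeff (ι2 Ex Ey q)
      = ∑ p, (Finsupp.single (ι2 Ex Ey p) (w p)) (ι2 Ex Ey q) := by
    simp only [emb, LinearMap.coe_mk, AddHom.coe_mk, AddMonoidAlgebra.coeff_sum,
      AddMonoidAlgebra.coeff_single]
    exact Finsupp.finset_sum_apply _ _ _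
  rw [this, Finset.sum_eq_single q]
  · simp
  · intro p _ hpq
    rw [Finsupp.single_apply_eq_zero]
    intro h
    exact absurd (ι2_inj Ex Ey h).symm hpq
  · simp

lemma emb_supported (w : (Fin Ex × Fin Ey) → ℂ) :
    SupportedInRect (emb Ex Ey w) Ex Ey := by
  classical
  intro p hp
  have hsub := Finsupp.support_finset_sum (s := (Finset.univ : Finset (Fin Ex × Fin Ey)))
      (f := fun p => Finsupp.single (ι2 Ex Ey p) (w p))
  have hp' := hsub (by simpa only [emb, LinearMap.coe_mk, AddHom.coe_mk,
    AddMonoidAlgebra.coeff_sum, AddMonoidAlgebra.coeff_single] using hp)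
  simp only [Finset.mem_biUnion, Finset.mem_univ, true_and] at hp'
  obtain ⟨q, hq⟩ := hp'
  have := Finsupp.support_single_subset hq
  simp only [Finset.mem_singleton] at this
  subst this
  simp only [ι2]
  exact ⟨by positivity, by exact_mod_cast q.1.isLt, by positivity, by exact_mod_cast q.2.isLt⟩

end AnnihilAux

open AnnihilAux in
/-- **Existence of an annihilating kernel (paper's Theorem 1).**
If `E_x E_y N_c > (C_x + E_x − 1)(C_y + E_y − 1)`, then for any family of `N_c`
finitely supported functions `S_c : ℤ × ℤ → ℂ`, each supported in a `C_x × C_y`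
rectangle, there is a not-identically-zero family `α_c`, each supported in an
`E_x × E_y` rectangle, with `∑ c, α_c ⋆ S_c = 0`.  (In `AddMonoidAlgebra`,
multiplication is exactly the discrete convolution
`(f * g) i = ∑ j, f j * g (i - j)`.) -/
theorem annihilating_kernel_exists
    (Nc Cx Cy Ex Ey : ℕ)
    (hNc : 0 < Nc) (hCx : 0 < Cx) (hCy : 0 < Cy) (hEx : 0 < Ex) (hEy : 0 < Ey)
    (hcount : Ex * Ey * Nc > (Cx + Ex - 1) * (Cy + Ey - 1))
    (S : Fin Nc → AddMonoidAlgebra ℂ (ℤ × ℤ))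
    (hS : ∀ c, SupportedInRect (S c) Cx Cy) :
    ∃ α : Fin Nc → AddMonoidAlgebra ℂ (ℤ × ℤ),
      (¬ ∀ c, α c = 0) ∧
      (∀ c, SupportedInRect (α c) Ex Ey) ∧
      (∑ c, α c * S c) = 0 := by
  classical
  set A := Cx + Ex - 1 with hA
  set B := Cy + Ey - 1 with hB
  -- Big linear map from stacked coefficient vectors to the element of AddMonoidAlgebra
  let F : ((Fin Nc × (Fin Ex × Fin Ey)) → ℂ) →ₗ[ℂ] AddMonoidAlgebra ℂ (ℤ × ℤ) :=
    ∑ c : Fin Nc, (LinearMap.mulRight ℂ (S c)).comp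
      ((emb Ex Ey).comp (LinearMap.funLeft ℂ ℂ (fun p => (c, p))))
  -- Restriction to the big rectangle
  let Rst : AddMonoidAlgebra ℂ (ℤ × ℤ) →ₗ[ℂ] ((Fin A × Fin B) → ℂ) :=
    LinearMap.pi (fun q => (Finsupp.lapply (ι2 A B q)).comp
      (AddMonoidAlgebra.coeffLinearEquiv ℂ).toLinearMap)
  let T := Rst.comp F
  have hdim : Module.finrank ℂ ((Fin A × Fin B) → ℂ)
      < Module.finrank ℂ ((Fin Nc × (Fin Ex × Fin Ey)) → ℂ) := by
    rw [Module.finrank_fintype_fun_eq_card, Module.finrank_fintype_fun_eq_card]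
    simp only [Fintype.card_prod, Fintype.card_fin]
    calc A * B < Ex * Ey * Nc := hcount
    _ = Nc * (Ex * Ey) := by ring
  have hker : LinearMap.ker T ≠ ⊥ := LinearMap.ker_ne_bot_of_finrank_lt hdim
  obtain ⟨v, hvker, hv0⟩ := (Submodule.ne_bot_iff _).mp hker
  refine ⟨fun c => emb Ex Ey (fun p => v (c, p)), ?_, fun c => emb_supported Ex Ey _, ?_⟩
  · intro hall
    apply hv0
    funext cp
    obtain ⟨c, p⟩ := cp
    have := congrArg (fun f => f.coeff (ι2 Ex Ey p)) (hall c)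
    simpa [emb_apply] using this
  · -- The sum equals F v
    have hFv : (∑ c, emb Ex Ey (fun p => v (c, p)) * S c) = F v := by
      simp only [F, LinearMap.sum_apply, LinearMap.comp_apply, LinearMap.mulRight_apply,
        LinearMap.funLeft_apply]
      rfl
    rw [hFv]
    -- F v vanishes on the big rectangle since T v = 0
    have hTv : T v = 0 := hvker
    have hvanish : ∀ q : Fin A × Fin B, (F v).coeff (ι2 A B q) = 0 := by
      intro q
      have := congrFun hTv q
      simpa [T, Rst, LinearMap.pi_apply, Finsupp.lapply_apply] using this
    -- The support of F v lies in the big rectangle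
    have hsupp : SupportedInRect (F v) A B := by
      intro p hp
      have hFv' : F v = ∑ c, emb Ex Ey (fun p => v (c, p)) * S c := hFv.symm
      rw [hFv', AddMonoidAlgebra.coeff_sum] at hp
      have hp' := Finsupp.support_finset_sum hp
      simp only [Finset.mem_biUnion, Finset.mem_univ, true_and] at hp'
      obtain ⟨c, hc⟩ := hp'
      have hc' := AddMonoidAlgebra.support_coeff_mul_subset _ (S c) hc
      rw [Finset.mem_add] at hc'
      obtain ⟨a, ha, s, hs, rfl⟩ := hc'
      obtain ⟨ha1, ha2, ha3, ha4⟩ := emb_supported Ex Ey (fun p => v (c, p)) a ha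
      obtain ⟨hs1, hs2, hs3, hs4⟩ := hS c s hs
      have hAcast : (A : ℤ) = (Cx : ℤ) + Ex - 1 := by
        rw [hA]; push_cast [Nat.cast_sub (by omega : 1 ≤ Cx + Ex)]; ring
      have hBcast : (B : ℤ) = (Cy : ℤ) + Ey - 1 := by
        rw [hB]; push_cast [Nat.cast_sub (by omega : 1 ≤ Cy + Ey)]; ring
      simp only [Prod.fst_add, Prod.snd_add]
      omega
    -- hence F v = 0
    ext p
    by_contra hne
    have hp : p ∈ (F v).coeff.support := Finsupp.mem_support_iff.mpr (by simpa using hne)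
    obtain ⟨h1, h2, h3, h4⟩ := hsupp p hp
    have hq : p = ι2 A B (⟨p.1.toNat, by omega⟩, ⟨p.2.toNat, by omega⟩) := by
      simp [ι2, Prod.ext_iff]; omega
    have := hvanish (⟨p.1.toNat, by omega⟩, ⟨p.2.toNat, by omega⟩)
    rw [← hq] at this
    exact hne (by simpa using this)
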